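/- Let q be a power of an odd prime and let n ≥ 1 have 2-adic expansion n = 2^{r_1} + 2^{r_2} + ... + 2^{r_t} with 0 ≤ r_1 < r_2 < ... < r_t. If P is a Sylow 2-subgroup of GL_n(F_q) and, for each 1 ≤ i ≤ t, P_i is a Sylow 2-subgroup of GL_{2^{r_i}}(F_q), then P is isomorphic as a group to the direct product P_1 × P_2 × ... × P_t. -/

import Mathlib

open Finset Matrix

namespace SylowGLAux


/-- Sum of 2-adic valuations of `q^(j+1) - 1` for `j+1 = 1, …, n`. -/
def S (q n : ℕ) : ℕ := ∑ j ∈ Finset.range n, padicValNat 2 (q ^ (j + 1) - 1)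

lemma odd_geom_sum {q : ℕ} (hq : Odd q) {j : ℕ} (hj : Odd j) :
    Odd (∑ i ∈ Finset.range j, q ^ i) := by
  rw [Nat.odd_iff, Finset.sum_nat_mod]
  have h : ∀ i ∈ Finset.range j, q ^ i % 2 = 1 := fun i _ => Nat.odd_iff.mp hq.pow
  rw [Finset.sum_congr rfl h, Finset.sum_const, Finset.card_range, smul_eq_mul, mul_one,
    ]
  exact Nat.odd_iff.mp hj

lemma v_odd {q : ℕ} (hq : Odd q) (hq1 : 1 < q) {j : ℕ} (hj : Odd j) :
    padicValNat 2 (q ^ j - 1) = padicValNat 2 (q - 1) := by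
  have key : q ^ j - 1 = (q - 1) * ∑ i ∈ Finset.range j, q ^ i := by
    have h2 : (1 : ℕ) ≤ q ^ j := Nat.one_le_pow _ _ (by omega)
    zify [hq1.le, h2]
    rw [← geom_sum_mul]
    ring
  have hodd := Nat.odd_iff.mp (odd_geom_sum hq hj)
  have hne : (∑ i ∈ Finset.range j, q ^ i) ≠ 0 := by omega
  have hnd : ¬ (2 ∣ ∑ i ∈ Finset.range j, q ^ i) := by omega
  rw [key, padicValNat.mul (by omega) hne, padicValNat.eq_zero_of_not_dvd hnd, add_zero]

lemma v_even {q : ℕ} (hq : Odd q) (hq1 : 1 < q) {j : ℕ} (hj : Even j) (h0 : j ≠ 0) :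
    padicValNat 2 (q ^ j - 1)
      = padicValNat 2 (q - 1) + padicValNat 2 (q + 1) + padicValNat 2 (j / 2) := by
  have hqm := Nat.odd_iff.mp hq
  have hq2 : ¬ 2 ∣ q := by omega
  have H := padicValNat.pow_two_sub_pow (x := q) (y := 1) hq1 (by omega) hq2 h0 hj
  simp only [one_pow] at H
  obtain ⟨k, hk⟩ := hj
  have hk0 : k ≠ 0 := by omega
  have hvj : padicValNat 2 j = 1 + padicValNat 2 k := by
    have : j = 2 * k := by omega
    rw [this, padicValNat.mul (by norm_num) hk0, padicValNat.self (by norm_num)]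
  have hj2 : j / 2 = k := by omega
  rw [hj2]
  omega

lemma T_add {u s : ℕ} (hu : u < 2 ^ s) :
    padicValNat 2 (Nat.factorial (u + 2 ^ s))
      = padicValNat 2 (Nat.factorial u) + padicValNat 2 (Nat.factorial (2 ^ s)) := by
  have hb : ∀ x : ℕ, x < 2 ^ (s + 2) → Nat.log 2 x < s + 2 := by
    intro x hx
    rcases Nat.eq_zero_or_pos x with rfl | hx0
    · simp
    · exact Nat.log_lt_of_lt_pow (by omega) hx
  have hp4 : (2:ℕ) ^ (s+2) = 4 * 2 ^ s := by ring
  have hpos : (0:ℕ) < 2 ^ s := Nat.two_pow_pos _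
  rw [padicValNat_factorial (b := s + 2) (hb _ (by omega)),
    padicValNat_factorial (b := s + 2) (hb _ (by omega)),
    padicValNat_factorial (b := s + 2) (hb _ (by omega)),
    ← Finset.sum_add_distrib]
  refine Finset.sum_congr rfl fun i hi => ?_
  rcases le_or_gt i s with h | h
  · obtain ⟨c, hc⟩ : (2:ℕ) ^ i ∣ 2 ^ s := pow_dvd_pow 2 h
    have hposi : 0 < (2:ℕ) ^ i := Nat.two_pow_pos _
    rw [hc, Nat.add_mul_div_left _ _ hposi, Nat.mul_div_cancel_left _ hposi]
  · have h2 : (2:ℕ) ^ (s + 1) ≤ 2 ^ i := Nat.pow_le_pow_right (by norm_num) h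
    have h3 : (2:ℕ) ^ (s + 1) = 2 * 2 ^ s := by ring
    rw [Nat.div_eq_of_lt (by omega), Nat.div_eq_of_lt (by omega), Nat.div_eq_of_lt (by omega)]

lemma S_closed {q : ℕ} (hq : Odd q) (hq1 : 1 < q) (n : ℕ) :
    S q n = n * padicValNat 2 (q - 1) + (n / 2) * padicValNat 2 (q + 1)
      + padicValNat 2 (Nat.factorial (n / 2)) := by
  induction n with
  | zero => simp [S]
  | succ n ih =>
    rw [S, Finset.sum_range_succ, ← S, ih]
    rcases Nat.even_or_odd (n + 1) with he | ho
    · have hem := Nat.even_iff.mp he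
      have hk : (n + 1) / 2 = n / 2 + 1 := by omega
      have hnd2 : n / 2 + 1 ≠ 0 := by omega
      rw [v_even hq hq1 he (by omega), hk, Nat.factorial_succ,
        padicValNat.mul hnd2 (Nat.factorial_ne_zero _)]
      ring
    · have hom := Nat.odd_iff.mp ho
      have hk : (n + 1) / 2 = n / 2 := by omega
      rw [v_odd hq hq1 ho, hk]
      ring

lemma S_add {q : ℕ} (hq : Odd q) (hq1 : 1 < q) {m s : ℕ} (hm : m < 2 ^ s) :
    S q (m + 2 ^ s) = S q m + S q (2 ^ s) := by
  rcases Nat.eq_zero_or_pos s with rfl | hs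
  · have hm0 : m = 0 := by simpa using hm
    subst hm0
    simp [S]
  · have hpow : (2:ℕ) ^ s = 2 * 2 ^ (s - 1) := by
      rw [← pow_succ']
      congr 1
      omega
    have h2 : (m + 2 ^ s) / 2 = m / 2 + 2 ^ (s - 1) := by omega
    have h3 : m / 2 < 2 ^ (s - 1) := by omega
    have h4 : (2:ℕ) ^ s / 2 = 2 ^ (s - 1) := by omega
    rw [S_closed hq hq1, S_closed hq hq1, S_closed hq hq1, h2, h4, T_add h3]
    ring

lemma sum_two_pow_lt {t : ℕ} (r : Fin t → ℕ) (hr : StrictMono r) {R : ℕ}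
    (hR : ∀ i, r i < R) : ∑ i : Fin t, 2 ^ (r i) < 2 ^ R := by
  induction t generalizing R with
  | zero => simpa using Nat.two_pow_pos R
  | succ t ih =>
    rw [Fin.sum_univ_castSucc]
    have h1 : ∑ i : Fin t, 2 ^ (r i.castSucc) < 2 ^ (r (Fin.last t)) :=
      ih (fun i => r i.castSucc) (hr.comp Fin.strictMono_castSucc)
        (R := r (Fin.last t)) (fun i => hr (Fin.castSucc_lt_last i))
    have h2 : 2 ^ (r (Fin.last t)) * 2 ≤ 2 ^ R := by
      calc 2 ^ (r (Fin.last t)) * 2 = 2 ^ (r (Fin.last t) + 1) := by ring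
      _ ≤ 2 ^ R := Nat.pow_le_pow_right (by norm_num) (hR (Fin.last t))
    omega

lemma S_sum {q : ℕ} (hq : Odd q) (hq1 : 1 < q) {t : ℕ} (r : Fin t → ℕ) (hr : StrictMono r) :
    S q (∑ i : Fin t, 2 ^ (r i)) = ∑ i : Fin t, S q (2 ^ (r i)) := by
  induction t with
  | zero => simp [S]
  | succ t ih =>
    rw [Fin.sum_univ_castSucc, Fin.sum_univ_castSucc (f := fun i => S q (2 ^ (r i)))]
    have hlt : ∑ i : Fin t, 2 ^ (r i.castSucc) < 2 ^ (r (Fin.last t)) :=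
      sum_two_pow_lt (fun i => r i.castSucc) (hr.comp Fin.strictMono_castSucc)
        (fun i => hr (Fin.castSucc_lt_last i))
    rw [S_add hq hq1 hlt, ih (fun i => r i.castSucc) (hr.comp Fin.strictMono_castSucc)]



variable {ι : Type} [Fintype ι] [DecidableEq ι] {κ : ι → Type}
  [∀ i, Fintype (κ i)] [∀ i, DecidableEq (κ i)] {R : Type} [CommRing R]

/-- Units of a pi monoid from a family of units. -/
def piUnits {M : ι → Type} [∀ i, Monoid (M i)] : (∀ i, (M i)ˣ) →* (∀ i, M i)ˣ where
  toFun x := ⟨fun i => x i, fun i => ((x i)⁻¹ : (M i)ˣ), by ext i; simp, by ext i; simp⟩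
  map_one' := by ext i <;> simp
  map_mul' x y := by ext i <;> simp

lemma piUnits_injective {M : ι → Type} [∀ i, Monoid (M i)] :
    Function.Injective (piUnits (M := M) (ι := ι)) := by
  intro x y h
  funext i
  ext
  exact congrFun (congrArg Units.val h) i

/-- Block-diagonal embedding on units. -/
def blockUnits : (∀ i, (Matrix (κ i) (κ i) R)ˣ) →* (Matrix ((i : ι) × κ i) ((i : ι) × κ i) R)ˣ :=
  (Units.map (Matrix.blockDiagonal'RingHom κ R).toMonoidHom).comp piUnits

lemma blockUnits_injective :
    Function.Injective (blockUnits (κ := κ) (R := R)) := by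
  intro x y h
  apply piUnits_injective
  ext1
  exact Matrix.blockDiagonal'_injective (congrArg Units.val h)

/-- A pi subgroup as a direct product. -/
def subgroupPiEquiv {G : ι → Type} [∀ i, Group (G i)] (H : ∀ i, Subgroup (G i)) :
    (Subgroup.pi Set.univ H) ≃* ∀ i, H i where
  toFun x i := ⟨x.1 i, x.2 i (Set.mem_univ i)⟩
  invFun y := ⟨fun i => y i, fun i _ => (y i).2⟩
  left_inv x := rfl
  right_inv y := rfl
  map_mul' x y := rfl




variable {F : Type} [Field F] [Fintype F]

lemma v_card_GL (hq : Odd (Fintype.card F)) (m : ℕ) :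
    padicValNat 2 (Nat.card (GL (Fin m) F)) = S (Fintype.card F) m := by
  classical
  set q := Fintype.card F with hqdef
  have hq1 : 1 < q := Fintype.one_lt_card
  have hqm := Nat.odd_iff.mp hq
  rw [Matrix.card_GL_field]
  have hfac : ∀ i : Fin m, q ^ m - q ^ (i : ℕ) = q ^ (i : ℕ) * (q ^ (m - (i : ℕ)) - 1) := by
    intro i
    rw [Nat.mul_sub, mul_one, ← pow_add]
    congr 2
    omega
  have hne : ∀ i ∈ Finset.univ (α := Fin m), q ^ m - q ^ (i : ℕ) ≠ 0 := by
    intro i _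
    have : q ^ (i : ℕ) < q ^ m := Nat.pow_lt_pow_right hq1 i.isLt
    omega
  rw [← Nat.factorization_def _ Nat.prime_two, Nat.factorization_prod hne,
    Finsupp.finset_sum_apply]
  have hterm : ∀ i : Fin m,
      (Nat.factorization (q ^ m - q ^ (i : ℕ))) 2 = padicValNat 2 (q ^ (m - (i : ℕ)) - 1) := by
    intro i
    have hne1 : q ^ (m - (i : ℕ)) - 1 ≠ 0 := by
      have : 1 < q ^ (m - (i : ℕ)) := Nat.one_lt_pow (by omega) hq1
      omega
    have hne0 : q ^ (i : ℕ) ≠ 0 := by positivity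
    rw [Nat.factorization_def _ Nat.prime_two, hfac i, padicValNat.mul hne0 hne1,
      padicValNat.eq_zero_of_not_dvd, zero_add]
    have : Odd (q ^ (i : ℕ)) := hq.pow
    rw [Nat.odd_iff] at this
    omega
  rw [Finset.sum_congr rfl fun i _ => hterm i]
  rw [Fin.sum_univ_eq_sum_range (fun i => padicValNat 2 (q ^ (m - i) - 1))]
  rw [S, ← Finset.sum_range_reflect]
  refine Finset.sum_congr rfl fun j hj => ?_
  rw [Finset.mem_range] at hj
  have he : m - (m - 1 - j) = j + 1 := by omega
  rw [he]


end SylowGLAux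

open SylowGLAux

/-- Let `q` be a power of an odd prime and let `n ≥ 1` have 2-adic expansion
`n = 2^(r 1) + ⋯ + 2^(r t)` with strictly increasing exponents. If `P` is a Sylow 2-subgroup of
`GL n (F_q)` and each `Ps i` is a Sylow 2-subgroup of `GL (2^(r i)) (F_q)`, then `P` is
isomorphic as a group to the direct product of the `Ps i`. -/
theorem sylow_two_GL_iso_prod_of_two_adic_expansion
    {F : Type} [Field F] [Fintype F]
    (hq : ∃ p k : ℕ, p.Prime ∧ Odd p ∧ 0 < k ∧ Fintype.card F = p ^ k)
    {n t : ℕ} (hn : 1 ≤ n) (r : Fin t → ℕ) (hr : StrictMono r)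
    (hexp : n = ∑ i : Fin t, 2 ^ (r i))
    (P : Sylow 2 (Matrix.GeneralLinearGroup (Fin n) F))
    (Ps : (i : Fin t) → Sylow 2 (Matrix.GeneralLinearGroup (Fin (2 ^ (r i))) F)) :
    Nonempty ((P : Subgroup (Matrix.GeneralLinearGroup (Fin n) F)) ≃*
      ((i : Fin t) → (Ps i : Subgroup (Matrix.GeneralLinearGroup (Fin (2 ^ (r i))) F)))) := by
  classical
  haveI : Fact (Nat.Prime 2) := ⟨Nat.prime_two⟩
  obtain ⟨p, k, hp, hpodd, hk, hcard⟩ := hq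
  have hqodd : Odd (Fintype.card F) := hcard ▸ hpodd.pow
  have hq1 : 1 < Fintype.card F := Fintype.one_lt_card
  -- index equivalence
  have hcards : Fintype.card ((i : Fin t) × Fin (2 ^ (r i))) = n := by
    simp [Fintype.card_sigma, hexp]
  let e : ((i : Fin t) × Fin (2 ^ (r i))) ≃ Fin n :=
    Fintype.equivFinOfCardEq hcards
  -- block-diagonal embedding
  let ρ : Matrix ((i : Fin t) × Fin (2 ^ (r i))) ((i : Fin t) × Fin (2 ^ (r i))) F ≃*
      Matrix (Fin n) (Fin n) F :=
    (Matrix.reindexAlgEquiv F F e).toRingEquiv.toMulEquiv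
  let Φ : (∀ i, GL (Fin (2 ^ (r i))) F) →* GL (Fin n) F :=
    (Units.mapEquiv ρ).toMonoidHom.comp blockUnits
  have hΦinj : Function.Injective Φ := by
    intro x y h
    exact blockUnits_injective ((Units.mapEquiv ρ).injective h)
  -- the candidate Sylow subgroup
  let K : Subgroup (∀ i, GL (Fin (2 ^ (r i))) F) := Subgroup.pi Set.univ fun i => (Ps i : Subgroup _)
  let H : Subgroup (GL (Fin n) F) := K.map Φ
  have eKH : K ≃* H := K.equivMapOfInjective Φ hΦinj
  have eK : K ≃* ∀ i, ((Ps i : Subgroup (GL (Fin (2 ^ (r i))) F))) :=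
    subgroupPiEquiv fun i => (Ps i : Subgroup (GL (Fin (2 ^ (r i))) F))
  have hkey : (Nat.card (GL (Fin n) F)).factorization 2
      = ∑ i : Fin t, (Nat.card (GL (Fin (2 ^ (r i))) F)).factorization 2 := by
    rw [Nat.factorization_def _ Nat.prime_two, v_card_GL hqodd, hexp,
      S_sum hqodd hq1 r hr]
    exact Finset.sum_congr rfl fun i _ => by
      rw [Nat.factorization_def _ Nat.prime_two, v_card_GL hqodd]
  have hcardH : Nat.card H = 2 ^ (Nat.card (GL (Fin n) F)).factorization 2 := by
    rw [← Nat.card_congr eKH.toEquiv, Nat.card_congr eK.toEquiv, Nat.card_pi, hkey,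
      Finset.prod_congr rfl fun i _ => Sylow.card_eq_multiplicity (Ps i),
      Finset.prod_pow_eq_pow_sum]
  let Q : Sylow 2 (GL (Fin n) F) := Sylow.ofCard H hcardH
  have ePQ : (P : Subgroup (GL (Fin n) F)) ≃* Q := Sylow.equiv P Q
  exact ⟨ePQ.trans (eKH.symm.trans eK)⟩
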